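/- Let 𝒦 be a symmetric invertible real N×N matrix, 𝒦_{*X} ∈ ℝ^{1×N}, 𝒦_{**} ∈ ℝ, Y ∈ ℝ^N, η > 0, t ≥ 0. Let (f₀(x*), f₀(𝒳)) ∈ ℝ × ℝ^N be a centered random vector with square-integrable coordinates such that Var(f₀(x*)) = 𝒦_{**}, Cov(f₀(x*), f₀(𝒳)) = 𝒦_{*X}, and Cov(f₀(𝒳), f₀(𝒳)) = 𝒦. Define f_t(x*) = f₀(x*) + 𝒦_{*X} 𝒦⁻¹ (exp(−η 𝒦 t) − I)(f₀(𝒳) − Y). Then E[f_t(x*)] = 𝒦_{*X} 𝒦⁻¹ (I − exp(−η 𝒦 t)) Y and Var(f_t(x*)) = 𝒦_{**} − 𝒦_{*X} 𝒦⁻¹ (I − exp(−2η 𝒦 t)) 𝒦_{*X}ᵀ. -/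

import Mathlib

open Matrix MeasureTheory

private lemma l2_mul_integrable {Ω : Type*} [MeasurableSpace Ω] (μ : Measure Ω)
    [IsProbabilityMeasure μ] {f g : Ω → ℝ} (hf : MemLp f 2 μ) (hg : MemLp g 2 μ) :
    Integrable (fun ω => f ω * g ω) μ := by
  have h1 := (hf.add hg).integrable_sq
  have h2 := hf.integrable_sq
  have h3 := hg.integrable_sq
  have e : (fun ω => f ω * g ω) = fun ω => (((f ω + g ω)^2 - f ω ^2) - g ω^2)/2 := by
    funext ω; ring
  rw [e]; exact ((h1.sub h2).sub h3).div_const 2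

theorem readout_layer_prediction_mean_and_variance {N : ℕ}
    (K : Matrix (Fin N) (Fin N) ℝ) (hKsym : K.IsSymm) (hKinv : IsUnit K)
    (kx : Fin N → ℝ) (Kss : ℝ) (Y : Fin N → ℝ)
    (η t : ℝ) (hη : 0 < η) (ht : 0 ≤ t)
    {Ω : Type*} [MeasurableSpace Ω] (μ : Measure Ω) [IsProbabilityMeasure μ]
    (fs : Ω → ℝ) (fX : Ω → (Fin N → ℝ))
    (hfs2 : MemLp fs 2 μ) (hfX2 : ∀ i, MemLp (fun ω => fX ω i) 2 μ)
    (hfsmean : ∫ ω, fs ω ∂μ = 0) (hfXmean : ∀ i, ∫ ω, fX ω i ∂μ = 0)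
    (hvar : ∫ ω, fs ω ^ 2 ∂μ = Kss)
    (hcross : ∀ j, ∫ ω, fs ω * fX ω j ∂μ = kx j)
    (hcov : ∀ i j, ∫ ω, fX ω i * fX ω j ∂μ = K i j)
    (f : Ω → ℝ)
    (hf : ∀ ω, f ω = fs ω +
      kx ⬝ᵥ (K⁻¹.mulVec ((NormedSpace.exp (-(η * t) • K) - 1).mulVec (fX ω - Y)))) :
    (∫ ω, f ω ∂μ =
      kx ⬝ᵥ (K⁻¹.mulVec ((1 - NormedSpace.exp (-(η * t) • K)).mulVec Y))) ∧
    (∫ ω, (f ω - ∫ ω', f ω' ∂μ) ^ 2 ∂μ =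
      Kss - kx ⬝ᵥ (K⁻¹.mulVec
        ((1 - NormedSpace.exp (-(2 * η * t) • K)).mulVec kx))) := by
  set E : Matrix (Fin N) (Fin N) ℝ := NormedSpace.exp (-(η * t) • K) with hE
  set E2 : Matrix (Fin N) (Fin N) ℝ := NormedSpace.exp (-(2 * η * t) • K) with hE2def
  set M : Matrix (Fin N) (Fin N) ℝ := E - 1 with hM
  set w : Fin N → ℝ := (kx ᵥ* K⁻¹) ᵥ* M with hwdef
  have hdet : IsUnit K.det := (isUnit_iff_isUnit_det K).mp hKinv
  have hinv1 : K⁻¹ * K = 1 := nonsing_inv_mul K hdet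
  have hinv2 : K * K⁻¹ = 1 := mul_nonsing_inv K hdet
  -- commutation facts
  have hKE : Commute K E := ((Commute.refl K).smul_right (-(η * t))).exp_right
  have hKE2 : Commute K E2 := ((Commute.refl K).smul_right (-(2 * η * t))).exp_right
  have hKM : Commute K M := hKE.sub_right (Commute.one_right K)
  have comm_inv : ∀ A : Matrix (Fin N) (Fin N) ℝ, Commute K A → K⁻¹ * A = A * K⁻¹ := by
    intro A h
    calc K⁻¹ * A = K⁻¹ * A * (K * K⁻¹) := by rw [hinv2, mul_one]
      _ = K⁻¹ * (A * K) * K⁻¹ := by simp only [Matrix.mul_assoc]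
      _ = K⁻¹ * (K * A) * K⁻¹ := by rw [← h.eq]
      _ = (K⁻¹ * K) * (A * K⁻¹) := by simp only [Matrix.mul_assoc]
      _ = A * K⁻¹ := by rw [hinv1, one_mul]
  have hKiM : K⁻¹ * M = M * K⁻¹ := comm_inv M hKM
  have hKiE2 : K⁻¹ * (1 - E2) = (1 - E2) * K⁻¹ :=
    comm_inv _ ((Commute.one_right K).sub_right hKE2)
  -- E2 = E * E
  have hE2 : E2 = E * E := by
    rw [hE2def, hE, show (-(2 * η * t)) • K = (-(η * t)) • K + (-(η * t)) • K by
      rw [← add_smul]; congr 1; ring]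
    exact Matrix.exp_add_of_commute _ _ (Commute.refl _)
  -- symmetry facts
  have hsmulsym : ((-(η * t)) • K).IsSymm := by
    unfold Matrix.IsSymm; rw [transpose_smul, hKsym]
  have hMsym : Mᵀ = M := by
    rw [hM, transpose_sub, transpose_one, hsmulsym.exp]
  have hKisym : (K⁻¹)ᵀ = K⁻¹ := by rw [transpose_nonsing_inv, hKsym]
  -- w as mulVec
  have hwvec : w = kx ᵥ* (K⁻¹ * M) := by rw [hwdef, vecMul_vecMul]
  have hw2 : w = (M * K⁻¹).mulVec kx := by
    rw [hwvec, ← Matrix.mulVec_transpose, transpose_mul, hMsym, hKisym]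
  -- the closed-form linear map
  have hfv : ∀ v : Fin N → ℝ, kx ⬝ᵥ (K⁻¹.mulVec (M.mulVec v)) = w ⬝ᵥ v := by
    intro v
    rw [dotProduct_mulVec, dotProduct_mulVec, hwdef]
  -- rewrite f
  set S : Ω → ℝ := fun ω => w ⬝ᵥ fX ω with hSdef
  have hfeq : ∀ ω, f ω = fs ω + S ω - w ⬝ᵥ Y := by
    intro ω
    rw [hf ω, hfv, dotProduct_sub, ← add_sub_assoc]
  -- integrability
  have hfsint : Integrable fs μ := hfs2.integrable (by norm_num)
  have hfXint : ∀ i, Integrable (fun ω => fX ω i) μ :=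
    fun i => (hfX2 i).integrable (by norm_num)
  have hSsum : S = fun ω => ∑ j, w j * fX ω j := rfl
  have hSint : Integrable S μ := by
    rw [hSsum]
    exact integrable_finset_sum _ (fun j _ => (hfXint j).const_mul (w j))
  have hSmean : ∫ ω, S ω ∂μ = 0 := by
    rw [hSsum, integral_finset_sum _ (fun j _ => (hfXint j).const_mul (w j))]
    simp only [integral_const_mul, hfXmean, mul_zero, Finset.sum_const_zero]
  -- mean
  have hmean : ∫ ω, f ω ∂μ = -(w ⬝ᵥ Y) := by
    calc ∫ ω, f ω ∂μ = ∫ ω, (fs ω + S ω - w ⬝ᵥ Y) ∂μ := by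
          exact integral_congr_ae (Filter.Eventually.of_forall hfeq)
      _ = (∫ ω, (fs ω + S ω) ∂μ) - ∫ _ω, (w ⬝ᵥ Y) ∂μ :=
          integral_sub (hfsint.add hSint) (integrable_const _)
      _ = -(w ⬝ᵥ Y) := by
          rw [integral_add hfsint hSint, hfsmean, hSmean, integral_const]
          simp
  have htgt1 : kx ⬝ᵥ (K⁻¹.mulVec ((1 - E).mulVec Y)) = -(w ⬝ᵥ Y) := by
    rw [show (1 : Matrix (Fin N) (Fin N) ℝ) - E = -M by rw [hM, neg_sub],
      neg_mulVec, mulVec_neg, dotProduct_neg, hfv]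
  refine ⟨by rw [hmean, htgt1], ?_⟩
  -- variance
  have hcent : ∀ ω, f ω - ∫ ω', f ω' ∂μ = fs ω + S ω := by
    intro ω; rw [hfeq ω, hmean]; ring
  have hint1 : Integrable (fun ω => fs ω ^ 2) μ := hfs2.integrable_sq
  have hfsS : Integrable (fun ω => ∑ j, w j * (fs ω * fX ω j)) μ :=
    integrable_finset_sum _
      (fun j _ => (l2_mul_integrable μ hfs2 (hfX2 j)).const_mul (w j))
  have hfsSval : ∫ ω, fs ω * S ω ∂μ = w ⬝ᵥ kx := by
    have e : (fun ω => fs ω * S ω) = fun ω => ∑ j, w j * (fs ω * fX ω j) := by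
      funext ω
      rw [hSsum, Finset.mul_sum]
      exact Finset.sum_congr rfl (fun j _ => by ring)
    rw [e, integral_finset_sum _ (fun j _ =>
      (l2_mul_integrable μ hfs2 (hfX2 j)).const_mul (w j))]
    simp only [integral_const_mul, hcross]
    rfl
  have hSSe : (fun ω => S ω * S ω) =
      fun ω => ∑ i, ∑ j, (w i * w j) * (fX ω i * fX ω j) := by
    funext ω
    rw [hSsum]
    rw [Finset.sum_mul_sum]
    exact Finset.sum_congr rfl (fun i _ => Finset.sum_congr rfl (fun j _ => by ring))
  have hSSint : Integrable (fun ω => S ω * S ω) μ := by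
    rw [hSSe]
    exact integrable_finset_sum _ (fun i _ => integrable_finset_sum _
      (fun j _ => (l2_mul_integrable μ (hfX2 i) (hfX2 j)).const_mul _))
  have hSSval : ∫ ω, S ω * S ω ∂μ = w ⬝ᵥ K.mulVec w := by
    rw [hSSe, integral_finset_sum _ (fun i _ => integrable_finset_sum _
      (fun j _ => (l2_mul_integrable μ (hfX2 i) (hfX2 j)).const_mul _))]
    have : ∀ i : Fin N, ∫ ω, (∑ j, (w i * w j) * (fX ω i * fX ω j)) ∂μ
        = ∑ j, (w i * w j) * K i j := by
      intro i
      rw [integral_finset_sum _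
        (fun j _ => (l2_mul_integrable μ (hfX2 i) (hfX2 j)).const_mul _)]
      simp only [integral_const_mul, hcov]
    simp only [this]
    simp only [dotProduct, mulVec, Finset.mul_sum]
    exact Finset.sum_congr rfl (fun i _ => Finset.sum_congr rfl (fun j _ => by ring))
  have hfsSint : Integrable (fun ω => fs ω * S ω) μ := by
    have e : (fun ω => fs ω * S ω) = fun ω => ∑ j, w j * (fs ω * fX ω j) := by
      funext ω
      rw [hSsum, Finset.mul_sum]
      exact Finset.sum_congr rfl (fun j _ => by ring)
    rw [e]; exact hfsS
  -- expand the variance integral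
  have hvarint : ∫ ω, (f ω - ∫ ω', f ω' ∂μ) ^ 2 ∂μ
      = Kss + (2 * (w ⬝ᵥ kx) + w ⬝ᵥ K.mulVec w) := by
    have e : (fun ω => (f ω - ∫ ω', f ω' ∂μ) ^ 2)
        = fun ω => fs ω ^ 2 + (2 * (fs ω * S ω) + S ω * S ω) := by
      funext ω; rw [hcent ω]; ring
    have i1 : ∫ ω, (fs ω ^ 2 + (2 * (fs ω * S ω) + S ω * S ω)) ∂μ
        = (∫ ω, fs ω ^ 2 ∂μ) + ∫ ω, (2 * (fs ω * S ω) + S ω * S ω) ∂μ :=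
      integral_add hint1 ((hfsSint.const_mul 2).add hSSint)
    have i2 : ∫ ω, (2 * (fs ω * S ω) + S ω * S ω) ∂μ
        = (∫ ω, 2 * (fs ω * S ω) ∂μ) + ∫ ω, S ω * S ω ∂μ :=
      integral_add (hfsSint.const_mul 2) hSSint
    rw [show (∫ ω, (f ω - ∫ ω', f ω' ∂μ) ^ 2 ∂μ)
        = ∫ ω, (fs ω ^ 2 + (2 * (fs ω * S ω) + S ω * S ω)) ∂μ by rw [e]]
    rw [i1, i2, integral_const_mul, hvar, hfsSval, hSSval]
  rw [hvarint]
  -- the matrix algebra identity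
  have hA : w ⬝ᵥ kx = kx ⬝ᵥ (K⁻¹ * M).mulVec kx := by
    rw [dotProduct_mulVec, hwvec]
  have hB : w ⬝ᵥ K.mulVec w = kx ⬝ᵥ ((K⁻¹ * M) * (K * (M * K⁻¹))).mulVec kx := by
    have h1 : K.mulVec w = (K * (M * K⁻¹)).mulVec kx := by rw [hw2, mulVec_mulVec]
    rw [h1, hwvec, ← dotProduct_mulVec, mulVec_mulVec]
  have h3 : (K⁻¹ * M) * (K * (M * K⁻¹)) = M * M * K⁻¹ := by
    rw [hKiM]
    calc M * K⁻¹ * (K * (M * K⁻¹)) = M * ((K⁻¹ * K) * (M * K⁻¹)) := by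
          simp only [Matrix.mul_assoc]
      _ = M * M * K⁻¹ := by rw [hinv1, one_mul, ← Matrix.mul_assoc]
  have hMM : M + (M + M * M) = E2 - 1 := by
    rw [hM, hE2]; noncomm_ring
  have hkey : (K⁻¹ * M) + ((K⁻¹ * M) + (K⁻¹ * M) * (K * (M * K⁻¹)))
      = -(K⁻¹ * (1 - E2)) := by
    rw [h3, hKiM, hKiE2, ← neg_mul, neg_sub, ← add_mul, ← add_mul, hMM]
  have hscal : 2 * (w ⬝ᵥ kx) + w ⬝ᵥ K.mulVec w
      = -(kx ⬝ᵥ (K⁻¹.mulVec ((1 - E2).mulVec kx))) := by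
    rw [two_mul, add_assoc, hA, hB, ← dotProduct_add, ← dotProduct_add,
      ← add_mulVec, ← add_mulVec, hkey, neg_mulVec, dotProduct_neg,
      mulVec_mulVec]
  rw [hscal]; ring
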